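/- For every N ∈ ℕ, every m ∈ ℕ, all a, b ∈ ℕ and all tuples c, d : Fin m → ℕ, the commutator of D_N(a,b) with the normally ordered operator V_N(c|d) is given by the adjoint-action formula: D_N(a,b) ∘ V_N(c|d) − V_N(c|d) ∘ D_N(a,b) = ∑_{i : Fin m} δ_{b, c i} · V_N(update c i a | d) − ∑_{i : Fin m} δ_{a, d i} · V_N(c | update d i b), where update c i a replaces the i-th entry of c by a, and δ_{x,y} = 1 if x = y and 0 otherwise. -/

import Mathlib

open MvPolynomial

noncomputable abbrev R : Type := MvPolynomial (ℕ × ℕ) ℂ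

/-- The `gl(∞)` generator `D_N(a,b) p = ∑_{e<N} X_{(a,e)} ∂p/∂X_{(b,e)}`. -/
noncomputable def Dop (N a b : ℕ) : R →ₗ[ℂ] R :=
  ∑ e ∈ Finset.range N,
    (LinearMap.mulLeft ℂ (X (a, e))) ∘ₗ (pderiv ((b, e) : ℕ × ℕ)).toLinearMap

/-- The normally ordered operator `V_N(a|b)`. -/
noncomputable def Vop (N : ℕ) {m : ℕ} (a b : Fin m → ℕ) : R →ₗ[ℂ] R :=
  ∑ e : Fin m → Fin N,
    (LinearMap.mulLeft ℂ (∏ i, X (a i, (e i : ℕ)))) ∘ₗ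
      (List.ofFn fun i => (pderiv ((b i, (e i : ℕ)) : ℕ × ℕ)).toLinearMap).prod

/-- The cut-and-join operator `W_N(σ) = ∑_a V_N(a | a∘σ)`. -/
noncomputable def Wop (N : ℕ) {m : ℕ} (σ : Equiv.Perm (Fin m)) : R →ₗ[ℂ] R :=
  ∑ a : Fin m → Fin N, Vop N (fun i => (a i : ℕ)) (fun i => (a (σ i) : ℕ))

/-- Compatibility of index tuples with a two-fold graph. -/
def Compatible {N m : ℕ} (α β : Fin m → ℕ) (a b : Fin m → Fin N) : Prop :=
  (∀ i j, a i = a j ↔ α i = α j) ∧ (∀ i j, b i = b j ↔ β i = β j)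

instance {N m : ℕ} (α β : Fin m → ℕ) (a b : Fin m → Fin N) :
    Decidable (Compatible α β a b) :=
  inferInstanceAs (Decidable (_ ∧ _))

/-- The unnormalized graph operator `Ṽ_N(α,β)`. -/
noncomputable def Vt (N : ℕ) {m : ℕ} (α β : Fin m → ℕ) : R →ₗ[ℂ] R :=
  ∑ p ∈ Finset.univ.filter
      (fun p : (Fin m → Fin N) × (Fin m → Fin N) => Compatible α β p.1 p.2),
    Vop N (fun i => (p.1 i : ℕ)) (fun i => (p.2 i : ℕ))

lemma pderiv_comm' {σ : Type*} [DecidableEq σ] (x y : σ) (p : MvPolynomial σ ℂ) :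
    pderiv x (pderiv y p) = pderiv y (pderiv x p) := by
  induction p using MvPolynomial.induction_on' with
  | add p q hp hq => simp [hp, hq]
  | monomial s a =>
    rcases eq_or_ne x y with rfl | h
    · rfl
    · simp only [pderiv_monomial]
      rw [tsub_tsub, tsub_tsub, add_comm]
      congr 1
      rw [Finsupp.tsub_apply, Finsupp.tsub_apply, Finsupp.single_apply, Finsupp.single_apply]
      simp only [h, h.symm, if_neg, if_false, Nat.sub_zero]
      ring

/-- multiplication operator -/
noncomputable def Mc (q : R) : Module.End ℂ R := LinearMap.mulLeft ℂ q
/-- differentiation operator -/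
noncomputable def Pc (x : ℕ × ℕ) : Module.End ℂ R := (pderiv x).toLinearMap

@[simp] lemma Mc_apply (q p : R) : Mc q p = q * p := rfl
@[simp] lemma Pc_apply (x : ℕ × ℕ) (p : R) : Pc x p = pderiv x p := rfl

lemma Mc_mul (q r : R) : Mc (q * r) = Mc q * Mc r := by
  apply LinearMap.ext; intro p
  simp [Module.End.mul_eq_comp, mul_assoc]

lemma Mc_comm (q r : R) : Mc q * Mc r = Mc r * Mc q := by
  rw [← Mc_mul, ← Mc_mul, mul_comm]

lemma Pc_comm (x y : ℕ × ℕ) : Commute (Pc x) (Pc y) :=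
  LinearMap.ext fun p => pderiv_comm' x y p

lemma Pc_Mc (x : ℕ × ℕ) (q : R) : Pc x * Mc q = Mc q * Pc x + Mc (pderiv x q) := by
  apply LinearMap.ext; intro p
  simp only [Module.End.mul_eq_comp, LinearMap.add_apply, LinearMap.comp_apply,
    Mc_apply, Pc_apply, pderiv_mul]
  ring

@[simp] lemma Mc_one : Mc 1 = 1 := by apply LinearMap.ext; intro p; simp
@[simp] lemma Mc_zero : Mc 0 = 0 := by apply LinearMap.ext; intro p; simp

/-- product of differentiation operators -/
noncomputable def Qc {m : ℕ} (g : Fin m → ℕ × ℕ) : Module.End ℂ R :=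
  (List.ofFn fun i => Pc (g i)).prod

lemma Qc_zero (g : Fin 0 → ℕ × ℕ) : Qc g = 1 := by simp [Qc]

lemma Qc_succ {m : ℕ} (g : Fin (m + 1) → ℕ × ℕ) :
    Qc g = Pc (g 0) * Qc (fun i => g i.succ) := by
  simp [Qc, List.ofFn_succ]

lemma Pc_Qc {m : ℕ} (x : ℕ × ℕ) (g : Fin m → ℕ × ℕ) : Commute (Pc x) (Qc g) := by
  induction m with
  | zero => rw [Qc_zero]; exact Commute.one_right _
  | succ m ih => rw [Qc_succ]; exact (Pc_comm x (g 0)).mul_right (ih _)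

lemma Pc_Mc_X (z x : ℕ × ℕ) :
    Pc z * Mc (X x) = Mc (X x) * Pc z + (if z = x then (1:ℂ) else 0) • 1 := by
  rw [Pc_Mc]; congr 1
  rcases eq_or_ne z x with h | h
  · subst h; simp [pderiv_X_self]
  · rw [pderiv_X_of_ne (Ne.symm h)]; simp [h]

lemma Qc_update_zero {m : ℕ} (g : Fin (m + 1) → ℕ × ℕ) (y : ℕ × ℕ) :
    Qc (Function.update g 0 y) = Pc y * Qc (fun i => g i.succ) := by
  have h1 : Function.update g 0 y 0 = y := by simp
  have h2 : (fun i : Fin m => Function.update g 0 y i.succ) = fun i => g i.succ :=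
    funext fun i => Function.update_of_ne (Fin.succ_ne_zero i) y g
  rw [Qc_succ (Function.update g 0 y), h1, h2]

lemma Qc_update_succ {m : ℕ} (g : Fin (m + 1) → ℕ × ℕ) (i : Fin m) (y : ℕ × ℕ) :
    Qc (Function.update g i.succ y) = Pc (g 0) * Qc (Function.update (fun j => g j.succ) i y) := by
  have h1 : Function.update g i.succ y 0 = g 0 :=
    Function.update_of_ne (Fin.succ_ne_zero i).symm y g
  have h2 : (fun j : Fin m => Function.update g i.succ y j.succ)
      = Function.update (fun j => g j.succ) i y := by
    funext j
    rcases eq_or_ne j i with rfl | h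
    · simp
    · rw [Function.update_of_ne h, Function.update_of_ne (fun hc => h (Fin.succ_injective _ hc))]
  rw [Qc_succ (Function.update g i.succ y), h1, h2]

lemma Qc_Mc_Pc {m : ℕ} (g : Fin m → ℕ × ℕ) (x y : ℕ × ℕ) :
    Qc g * Mc (X x) * Pc y = Mc (X x) * (Qc g * Pc y)
      + ∑ i, (if g i = x then (1:ℂ) else 0) • Qc (Function.update g i y) := by
  induction m with
  | zero => rw [Qc_zero]; simp [mul_assoc]
  | succ m ih =>
    have hB : (Qc fun i => g i.succ) * Pc y = Qc (Function.update g 0 y) := by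
      rw [Qc_update_zero, ← (Pc_Qc y _).eq]
    calc Qc g * Mc (X x) * Pc y
        = Pc (g 0) * ((Qc fun i => g i.succ) * Mc (X x) * Pc y) := by
          rw [Qc_succ]; simp only [mul_assoc]
      _ = Pc (g 0) * Mc (X x) * ((Qc fun i => g i.succ) * Pc y)
          + ∑ i : Fin m, (if g i.succ = x then (1:ℂ) else 0) •
              (Pc (g 0) * Qc (Function.update (fun j => g j.succ) i y)) := by
          rw [ih, mul_add, Finset.mul_sum]
          simp only [mul_assoc, mul_smul_comm]
      _ = Mc (X x) * (Pc (g 0) * ((Qc fun i => g i.succ) * Pc y))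
          + (if g 0 = x then (1:ℂ) else 0) • Qc (Function.update g 0 y)
          + ∑ i : Fin m, (if g i.succ = x then (1:ℂ) else 0) •
              Qc (Function.update g i.succ y) := by
          rw [Pc_Mc_X, add_mul, smul_mul_assoc, one_mul, hB, mul_assoc]
          congr 1
          exact Finset.sum_congr rfl fun i _ => by rw [Qc_update_succ]
      _ = _ := by
          rw [Qc_succ g, Fin.sum_univ_succ]
          simp only [mul_assoc]
          abel

lemma pderiv_prod_X {m : ℕ} (s : Finset (Fin m)) (g : Fin m → ℕ × ℕ) (x : ℕ × ℕ) :
    pderiv x (∏ i ∈ s, (X (g i) : R))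
      = ∑ i ∈ s, if g i = x then ∏ j ∈ s.erase i, (X (g j) : R) else 0 := by
  induction s using Finset.induction_on with
  | empty => simp
  | insert a s ha ih =>
    rw [Finset.prod_insert ha, pderiv_mul, ih, Finset.sum_insert ha, Finset.erase_insert ha]
    have hX : (pderiv x (X (g a) : R)) = if g a = x then 1 else 0 := by
      rcases eq_or_ne (g a) x with h | h
      · rw [h, pderiv_X_self, if_pos rfl]
      · rw [pderiv_X_of_ne h, if_neg h]
    rw [hX]
    congr 1
    · split_ifs <;> simp
    · rw [Finset.mul_sum]
      refine Finset.sum_congr rfl fun i hi => ?_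
      rw [Finset.erase_insert_of_ne (ne_of_mem_of_not_mem hi ha).symm,
        Finset.prod_insert (fun hc => ha (Finset.mem_of_mem_erase hc)), mul_ite, mul_zero]

lemma Mc_sum {ι : Type*} (s : Finset ι) (q : ι → R) :
    Mc (∑ i ∈ s, q i) = ∑ i ∈ s, Mc (q i) := by
  apply LinearMap.ext; intro p
  simp [Finset.sum_mul]

lemma Mc_key {m : ℕ} (g : Fin m → ℕ × ℕ) (y : ℕ × ℕ) :
    Pc y * Mc (∏ i, X (g i)) = Mc (∏ i, X (g i)) * Pc y
      + ∑ i, (if g i = y then (1:ℂ) else 0) • Mc (∏ j ∈ Finset.univ.erase i, X (g j)) := by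
  rw [Pc_Mc, pderiv_prod_X, Mc_sum]
  congr 1
  refine Finset.sum_congr rfl fun i _ => ?_
  split_ifs <;> simp

lemma prod_update {m : ℕ} (u : Fin m → ℕ × ℕ) (i : Fin m) (x : ℕ × ℕ) :
    (∏ j, (X (Function.update u i x j) : R))
      = X x * ∏ j ∈ Finset.univ.erase i, (X (u j) : R) := by
  rw [← Finset.mul_prod_erase Finset.univ _ (Finset.mem_univ i), Function.update_self]
  congr 1
  refine Finset.prod_congr rfl fun j hj => ?_
  rw [Function.update_of_ne (Finset.ne_of_mem_erase hj)]

lemma comm_single {m : ℕ} (x y : ℕ × ℕ) (gc gd : Fin m → ℕ × ℕ) :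
    (Mc (X x) * Pc y) * (Mc (∏ i, X (gc i)) * Qc gd)
      - (Mc (∏ i, X (gc i)) * Qc gd) * (Mc (X x) * Pc y)
    = ∑ i, (if gc i = y then (1:ℂ) else 0) •
        (Mc (∏ j, X (Function.update gc i x j)) * Qc gd)
      - ∑ i, (if gd i = x then (1:ℂ) else 0) •
        (Mc (∏ i, X (gc i)) * Qc (Function.update gd i y)) := by
  have h1 : (Mc (X x) * Pc y) * (Mc (∏ i, X (gc i)) * Qc gd)
      = Mc (∏ i, X (gc i)) * (Mc (X x) * (Pc y * Qc gd))
        + ∑ i, (if gc i = y then (1:ℂ) else 0) •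
            (Mc (∏ j, X (Function.update gc i x j)) * Qc gd) := by
    calc (Mc (X x) * Pc y) * (Mc (∏ i, X (gc i)) * Qc gd)
        = Mc (X x) * ((Pc y * Mc (∏ i, X (gc i))) * Qc gd) := by
          simp only [mul_assoc]
      _ = Mc (X x) * (Mc (∏ i, X (gc i)) * Pc y * Qc gd)
          + ∑ i, (if gc i = y then (1:ℂ) else 0) •
              (Mc (X x) * (Mc (∏ j ∈ Finset.univ.erase i, X (gc j)) * Qc gd)) := by
          rw [Mc_key, add_mul, mul_add, Finset.sum_mul, Finset.mul_sum]
          simp only [smul_mul_assoc, mul_smul_comm, mul_assoc]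
      _ = _ := by
          congr 1
          · simp only [← mul_assoc]
            rw [Mc_comm]
          · refine Finset.sum_congr rfl fun i _ => ?_
            rw [prod_update, Mc_mul, mul_assoc]
  have h2 : (Mc (∏ i, X (gc i)) * Qc gd) * (Mc (X x) * Pc y)
      = Mc (∏ i, X (gc i)) * (Mc (X x) * (Pc y * Qc gd))
        + ∑ i, (if gd i = x then (1:ℂ) else 0) •
            (Mc (∏ i, X (gc i)) * Qc (Function.update gd i y)) := by
    calc (Mc (∏ i, X (gc i)) * Qc gd) * (Mc (X x) * Pc y)
        = Mc (∏ i, X (gc i)) * (Qc gd * Mc (X x) * Pc y) := by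
          simp only [mul_assoc]
      _ = Mc (∏ i, X (gc i)) * (Mc (X x) * (Qc gd * Pc y))
          + ∑ i, (if gd i = x then (1:ℂ) else 0) •
              (Mc (∏ i, X (gc i)) * Qc (Function.update gd i y)) := by
          rw [Qc_Mc_Pc, mul_add, Finset.mul_sum]
          simp only [mul_smul_comm]
      _ = _ := by rw [← (Pc_Qc y gd).eq]
  rw [h1, h2]
  abel

lemma sum_range_delta {α : Type*} [AddCommMonoid α] (N u v w : ℕ) (h : u < N) (T : ℕ → α) :
    ∑ f ∈ Finset.range N, (if (v, u) = (w, f) then T f else 0) = if w = v then T u else 0 := by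
  rcases eq_or_ne w v with heq | hw
  · rw [if_pos heq]
    have hc : ∀ f ∈ Finset.range N, (if ((v:ℕ), (u:ℕ)) = (w, f) then T f else 0)
        = if u = f then T f else 0 := by
      intro f _
      simp [Prod.ext_iff, heq]
    rw [Finset.sum_congr rfl hc, Finset.sum_ite_eq (Finset.range N) u T,
      if_pos (Finset.mem_range.mpr h)]
  · rw [if_neg hw]
    refine Finset.sum_eq_zero fun f _ => ?_
    exact if_neg fun hc => hw ((Prod.ext_iff.mp hc).1.symm)

lemma comm_e (N : ℕ) {m : ℕ} (a b : ℕ) (c d : Fin m → ℕ) (e : Fin m → Fin N) :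
    Dop N a b * (Mc (∏ i, X (c i, (e i : ℕ))) * Qc (fun i => (d i, (e i : ℕ))))
      - (Mc (∏ i, X (c i, (e i : ℕ))) * Qc (fun i => (d i, (e i : ℕ)))) * Dop N a b
    = ∑ i, (if b = c i then (1:ℂ) else 0) •
        (Mc (∏ j, X ((Function.update c i a) j, (e j : ℕ)))
          * Qc (fun j => (d j, (e j : ℕ))))
      - ∑ i, (if a = d i then (1:ℂ) else 0) •
        (Mc (∏ j, X (c j, (e j : ℕ)))
          * Qc (fun j => ((Function.update d i b) j, (e j : ℕ)))) := by
  have hD : Dop N a b = ∑ f ∈ Finset.range N, Mc (X (a, f)) * Pc (b, f) := rfl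
  rw [hD, Finset.sum_mul, Finset.mul_sum, ← Finset.sum_sub_distrib]
  have hstep : ∀ f ∈ Finset.range N,
      (Mc (X (a, f)) * Pc (b, f)) * (Mc (∏ i, X (c i, (e i : ℕ)))
          * Qc (fun i => (d i, (e i : ℕ))))
        - (Mc (∏ i, X (c i, (e i : ℕ))) * Qc (fun i => (d i, (e i : ℕ))))
          * (Mc (X (a, f)) * Pc (b, f))
      = (∑ i, if ((c i : ℕ), (e i : ℕ)) = ((b:ℕ), f) then
            Mc (∏ j, X (Function.update (fun k => ((c k : ℕ), (e k : ℕ))) i (a, f) j))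
              * Qc (fun k => (d k, (e k : ℕ))) else 0)
        - ∑ i, if ((d i : ℕ), (e i : ℕ)) = ((a:ℕ), f) then
            Mc (∏ k, X (c k, (e k : ℕ)))
              * Qc (Function.update (fun k => ((d k : ℕ), (e k : ℕ))) i ((b:ℕ), f)) else 0 := by
    intro f _
    rw [comm_single]
    congr 1 <;> refine Finset.sum_congr rfl fun i _ => ?_ <;> rw [ite_smul, one_smul, zero_smul]
  rw [Finset.sum_congr rfl hstep, Finset.sum_sub_distrib]
  congr 1
  · rw [Finset.sum_comm]
    refine Finset.sum_congr rfl fun i _ => ?_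
    rw [sum_range_delta N (e i) (c i) b (e i).isLt
      (fun f => Mc (∏ j, X (Function.update (fun k => ((c k : ℕ), (e k : ℕ))) i ((a:ℕ), f) j))
        * Qc (fun k => (d k, (e k : ℕ))))]
    have hupd : Function.update (fun k => ((c k : ℕ), (e k : ℕ))) i ((a:ℕ), (e i : ℕ))
        = fun j => ((Function.update c i a) j, (e j : ℕ)) := by
      funext j
      rcases eq_or_ne j i with rfl | h
      · simp
      · rw [Function.update_of_ne h, Function.update_of_ne h]
    rw [hupd, ite_smul, one_smul, zero_smul]
  · rw [Finset.sum_comm]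
    refine Finset.sum_congr rfl fun i _ => ?_
    rw [sum_range_delta N (e i) (d i) a (e i).isLt
      (fun f => Mc (∏ k, X (c k, (e k : ℕ)))
        * Qc (Function.update (fun k => ((d k : ℕ), (e k : ℕ))) i ((b:ℕ), f)))]
    have hupd : Function.update (fun k => ((d k : ℕ), (e k : ℕ))) i ((b:ℕ), (e i : ℕ))
        = fun j => ((Function.update d i b) j, (e j : ℕ)) := by
      funext j
      rcases eq_or_ne j i with rfl | h
      · simp
      · rw [Function.update_of_ne h, Function.update_of_ne h]
    rw [hupd, ite_smul, one_smul, zero_smul]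


/-- the adjoint-action formula for the commutator `[D_N(a,b), V_N(c|d)]`. -/
theorem Dop_Vop_commutator (N m : ℕ) (a b : ℕ) (c d : Fin m → ℕ) :
    Dop N a b ∘ₗ Vop N c d - Vop N c d ∘ₗ Dop N a b =
      (∑ i : Fin m, (if b = c i then (1:ℂ) else 0) • Vop N (Function.update c i a) d) -
        ∑ i : Fin m, (if a = d i then (1:ℂ) else 0) • Vop N c (Function.update d i b) := by
  have hV : ∀ (c' d' : Fin m → ℕ), Vop N c' d'
      = ∑ e : Fin m → Fin N,
          Mc (∏ i, X (c' i, (e i : ℕ))) * Qc (fun i => ((d' i : ℕ), (e i : ℕ))) :=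
    fun _ _ => rfl
  have hDV : Dop N a b ∘ₗ Vop N c d - Vop N c d ∘ₗ Dop N a b
      = Dop N a b * Vop N c d - Vop N c d * Dop N a b := rfl
  rw [hDV, hV, Finset.mul_sum, Finset.sum_mul, ← Finset.sum_sub_distrib,
    Finset.sum_congr rfl (fun e _ => comm_e N a b c d e), Finset.sum_sub_distrib]
  congr 1
  · rw [Finset.sum_comm]
    refine Finset.sum_congr rfl fun i _ => ?_
    rw [hV, Finset.smul_sum]
  · rw [Finset.sum_comm]
    refine Finset.sum_congr rfl fun i _ => ?_
    rw [hV, Finset.smul_sum]
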